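/- On the rectangle Q = [0,a]×[0,b] with bilinear shape functions, the hourglass mode is Ψ_h(x,y) = (1/2)(2x/a − 1)(2y/b − 1) up to sign, and its energy with respect to a constant diffusion matrix κ equals τ = (b²κ₁₁ + a²κ₂₂)/(3ab). -/

import Mathlib

open MeasureTheory

/-- Gradient of a function on ℝ² as a pair. -/
noncomputable def grad (f : ℝ × ℝ → ℝ) (p : ℝ × ℝ) : ℝ × ℝ :=
  (fderiv ℝ f p (1, 0), fderiv ℝ f p (0, 1))

/-- The bilinear form `w ↦ z ↦ (κ w) · z` for the symmetric matrix
`κ = [[k11,k12],[k12,k22]]`. -/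
def kform (k11 k12 k22 : ℝ) (w z : ℝ × ℝ) : ℝ :=
  (k11 * w.1 + k12 * w.2) * z.1 + (k12 * w.1 + k22 * w.2) * z.2

lemma integral_quad (A B C L : ℝ) :
    ∫ x in (0:ℝ)..L, (A*x^2 + B*x + C) = A*L^3/3 + B*L^2/2 + C*L := by
  have hder : ∀ x ∈ Set.uIcc (0:ℝ) L,
      HasDerivAt (fun t : ℝ => A/3*t^3 + B/2*t^2 + C*t) (A*x^2 + B*x + C) x := by
    intro x _
    have h1 : HasDerivAt (fun t : ℝ => t^3) (3*x^2) x := by simpa using hasDerivAt_pow 3 x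
    have h2 : HasDerivAt (fun t : ℝ => t^2) (2*x) x := by simpa using hasDerivAt_pow 2 x
    have h3 : HasDerivAt (fun t : ℝ => t) 1 x := hasDerivAt_id x
    have := ((h1.const_mul (A/3)).add (h2.const_mul (B/2))).add (h3.const_mul C)
    exact this.congr_deriv (by ring)
  rw [intervalIntegral.integral_eq_sub_of_hasDerivAt hder
    ((Continuous.intervalIntegrable (by continuity) _ _))]
  ring

lemma grad_bilinear (c d e r : ℝ) (p : ℝ × ℝ) :
    grad (fun q : ℝ × ℝ => c * (q.1*q.2) + d*q.1 + e*q.2 - r) p = (c*p.2 + d, c*p.1 + e) := by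
  have hx : HasFDerivAt (fun q : ℝ × ℝ => q.1) (ContinuousLinearMap.fst ℝ ℝ ℝ) p :=
    hasFDerivAt_fst
  have hy : HasFDerivAt (fun q : ℝ × ℝ => q.2) (ContinuousLinearMap.snd ℝ ℝ ℝ) p :=
    hasFDerivAt_snd
  have hF := (((hx.mul hy).const_mul c).add (hx.const_mul d)).add (hy.const_mul e) |>.sub_const r
  rw [grad, (show HasFDerivAt (fun q : ℝ × ℝ => c * (q.1*q.2) + d*q.1 + e*q.2 - r) _ p from hF).fderiv]
  simp [ContinuousLinearMap.smul_apply]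

set_option maxHeartbeats 1600000 in
/-- on the rectangle `Q = [0,a]×[0,b]` with bilinear (Q1) shape
functions, the hourglass mode is `Ψ_h(x,y) = (1/2)(2x/a − 1)(2y/b − 1)` up to
sign, and its energy for a constant symmetric diffusion matrix `κ` equals
`τ = (b²κ₁₁ + a²κ₂₂)/(3ab)`. -/
theorem hourglass_energy_rectangle
    (a b : ℝ) (ha : 0 < a) (hb : 0 < b)
    (k11 k12 k22 : ℝ)
    (φ : Fin 4 → ℝ × ℝ → ℝ)
    (hφ0 : ∀ p : ℝ × ℝ, φ 0 p = (1 - p.1 / a) * (1 - p.2 / b))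
    (hφ1 : ∀ p : ℝ × ℝ, φ 1 p = (p.1 / a) * (1 - p.2 / b))
    (hφ2 : ∀ p : ℝ × ℝ, φ 2 p = (p.1 / a) * (p.2 / b))
    (hφ3 : ∀ p : ℝ × ℝ, φ 3 p = (1 - p.1 / a) * (p.2 / b))
    (Ψh : ℝ × ℝ → ℝ)
    (hΨ : ∀ p, Ψh p = (1 / 2) * (-φ 0 p + φ 1 p - φ 2 p + φ 3 p))
    (τ : ℝ)
    (hτ : τ = ∫ p in Set.Icc ((0:ℝ), (0:ℝ)) (a, b),
      kform k11 k12 k22 (grad Ψh p) (grad Ψh p)) :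
    (∃ ε : ℝ, (ε = 1 ∨ ε = -1) ∧
      ∀ p : ℝ × ℝ, Ψh p = ε * ((1 / 2) * (2 * p.1 / a - 1) * (2 * p.2 / b - 1))) ∧
    τ = (b ^ 2 * k11 + a ^ 2 * k22) / (3 * a * b) := by
  have ha' : a ≠ 0 := ha.ne'
  have hb' : b ≠ 0 := hb.ne'
  -- explicit polynomial form of the hourglass mode
  have hΨ' : Ψh = fun q : ℝ × ℝ =>
      (-2/(a*b)) * (q.1*q.2) + (1/a)*q.1 + (1/b)*q.2 - 1/2 := by
    funext p
    rw [hΨ, hφ0 p, hφ1 p, hφ2 p, hφ3 p]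
    field_simp
    ring
  constructor
  · refine ⟨-1, Or.inr rfl, fun p => ?_⟩
    rw [hΨ']
    field_simp
    ring
  -- gradient
  have hgrad : ∀ p : ℝ × ℝ,
      grad Ψh p = ((-2/(a*b))*p.2 + 1/a, (-2/(a*b))*p.1 + 1/b) := by
    intro p
    rw [hΨ']
    exact grad_bilinear _ _ _ _ p
  rw [hτ]
  simp only [hgrad]
  rw [Set.Icc_prod_eq, MeasureTheory.Measure.volume_eq_prod,
    MeasureTheory.setIntegral_prod _ (by
      apply ContinuousOn.integrableOn_compact (isCompact_Icc.prod isCompact_Icc)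
      apply Continuous.continuousOn
      unfold kform
      fun_prop)]
  simp only [MeasureTheory.integral_Icc_eq_integral_Ioc,
    ← intervalIntegral.integral_of_le ha.le, ← intervalIntegral.integral_of_le hb.le]
  have hinner : ∀ x : ℝ,
      (∫ y in (0:ℝ)..b, kform k11 k12 k22
        ((-2/(a*b))*((x,y):ℝ×ℝ).2 + 1/a, (-2/(a*b))*((x,y):ℝ×ℝ).1 + 1/b)
        ((-2/(a*b))*((x,y):ℝ×ℝ).2 + 1/a, (-2/(a*b))*((x,y):ℝ×ℝ).1 + 1/b))
      = (k11*(-2/(a*b))^2)*b^3/3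
        + (2*k11*(-2/(a*b))*(1/a) + 2*k12*(-2/(a*b))*((-2/(a*b))*x+1/b))*b^2/2
        + (k11*(1/a)^2 + 2*k12*(1/a)*((-2/(a*b))*x+1/b)
            + k22*((-2/(a*b))*x+1/b)^2)*b := by
    intro x
    rw [show (fun y : ℝ => kform k11 k12 k22
        ((-2/(a*b))*((x,y):ℝ×ℝ).2 + 1/a, (-2/(a*b))*((x,y):ℝ×ℝ).1 + 1/b)
        ((-2/(a*b))*((x,y):ℝ×ℝ).2 + 1/a, (-2/(a*b))*((x,y):ℝ×ℝ).1 + 1/b))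
      = fun y : ℝ => (k11*(-2/(a*b))^2)*y^2
        + (2*k11*(-2/(a*b))*(1/a) + 2*k12*(-2/(a*b))*((-2/(a*b))*x+1/b))*y
        + (k11*(1/a)^2 + 2*k12*(1/a)*((-2/(a*b))*x+1/b)
            + k22*((-2/(a*b))*x+1/b)^2)
      from funext fun y => by simp [kform]; ring]
    exact integral_quad _ _ _ b
  simp only [hinner]
  have houter := integral_quad
      (k22*b*(-2/(a*b))^2)
      (k12*(-2/(a*b))^2*b^2 + 2*k12*(-2/(a*b))*b/a + 2*k22*(-2/(a*b)))
      (k11*(-2/(a*b))^2*b^3/3 + k11*(-2/(a*b))*b^2/a + k12*(-2/(a*b))*b + k11*b/a^2 + 2*k12/a + k22/b)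
      a
  rw [show (fun x : ℝ => (k11*(-2/(a*b))^2)*b^3/3
        + (2*k11*(-2/(a*b))*(1/a) + 2*k12*(-2/(a*b))*((-2/(a*b))*x+1/b))*b^2/2
        + (k11*(1/a)^2 + 2*k12*(1/a)*((-2/(a*b))*x+1/b)
            + k22*((-2/(a*b))*x+1/b)^2)*b)
      = fun x : ℝ =>
        ((k22*b*(-2/(a*b))^2)*x^2
          + (k12*(-2/(a*b))^2*b^2 + 2*k12*(-2/(a*b))*b/a + 2*k22*(-2/(a*b)))*x
          + (k11*(-2/(a*b))^2*b^3/3 + k11*(-2/(a*b))*b^2/a + k12*(-2/(a*b))*b + k11*b/a^2 + 2*k12/a + k22/b))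
      from funext fun x => by field_simp; ring, houter]
  field_simp
  ring
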